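/- Let B₂(x) be the linear B-spline (hat function on [0,2], B₂(x) = x for 0 ≤ x ≤ 1, B₂(x) = 2−x for 1 ≤ x ≤ 2, 0 otherwise), and for 0 < α < 1 define f_α = B₂ + αB₂(·−1) + B₂(·−2) and f̃_α = B₂ + αB₂(·−1) − B₂(·−2). Then min_{δ∈{−1,1}} ‖f_α − δ f̃_α‖_∞ = 2 and ‖|f_α| − |f̃_α|‖_∞ = 2α/(1+α). -/

import Mathlib

/-- The order-2 B-spline (hat function): `B₂(x) = x` on `[0,1]`, `2−x` on `[1,2]`,
`0` elsewhere; equivalently `B₂(x) = max(1 − |x−1|, 0)`. -/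
noncomputable def B2 (x : ℝ) : ℝ := max (1 - |x - 1|) 0

/-- `f_α = B₂ + α B₂(·−1) + B₂(·−2)`. -/
noncomputable def fα (α : ℝ) (x : ℝ) : ℝ := B2 x + α * B2 (x - 1) + B2 (x - 2)

/-- `f̃_α = B₂ + α B₂(·−1) − B₂(·−2)`. -/
noncomputable def ftα (α : ℝ) (x : ℝ) : ℝ := B2 x + α * B2 (x - 1) - B2 (x - 2)

lemma B2_nonneg (x : ℝ) : 0 ≤ B2 x := le_max_right _ _

lemma B2_le_one (x : ℝ) : B2 x ≤ 1 :=
  max_le (by linarith [abs_nonneg (x - 1)]) one_pos.le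

lemma B2_eq_zero_of_ge_two {x : ℝ} (h : 2 ≤ x) : B2 x = 0 := by
  unfold B2
  rw [abs_of_nonneg (by linarith : (0:ℝ) ≤ x - 1), max_eq_right (by linarith)]

lemma ciSup_eq_of {f : ℝ → ℝ} {c : ℝ} (h : ∀ x, f x ≤ c) (x0 : ℝ) (h0 : f x0 = c) :
    (⨆ x, f x) = c := by
  refine le_antisymm (ciSup_le h) ?_
  calc c = f x0 := h0.symm
    _ ≤ ⨆ x, f x := le_ciSup ⟨c, by rintro y ⟨x, rfl⟩; exact h x⟩ x0

lemma aux_abs (a b : ℝ) : |(|a| - |b|)| ≤ |a + b| := by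
  have h := abs_abs_sub_abs_le_abs_sub a (-b)
  simpa [sub_neg_eq_add] using h

lemma key_le_one {α : ℝ} (h0 : 0 ≤ α) (h1 : α ≤ 1) (x : ℝ) :
    B2 x + α * B2 (x - 1) ≤ 1 := by
  have hb1 := B2_nonneg (x - 1)
  have hl0 := B2_le_one x
  have hl1 := B2_le_one (x - 1)
  rcases le_total x 1 with h | h
  · have e : B2 (x - 1) = 0 := by
      unfold B2
      rw [abs_of_nonpos (by linarith : x - 1 - 1 ≤ 0), max_eq_right (by linarith)]
    rw [e]; linarith
  rcases le_total x 2 with h2 | h2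
  · have e1 : B2 x = 2 - x := by
      unfold B2
      rw [abs_of_nonneg (by linarith : (0:ℝ) ≤ x - 1), max_eq_left (by linarith)]
      ring
    have e2 : B2 (x - 1) = x - 1 := by
      unfold B2
      rw [abs_of_nonpos (by linarith : x - 1 - 1 ≤ 0), max_eq_left (by linarith)]
      ring
    rw [e1, e2]; nlinarith
  · rw [B2_eq_zero_of_ge_two h2]; nlinarith

lemma bound3 {α : ℝ} (hα0 : 0 < α) (hα1 : α < 1) (x : ℝ) :
    |(|fα α x| - |ftα α x|)| ≤ 2 * α / (1 + α) := by
  have h1α : (0:ℝ) < 1 + α := by linarith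
  have hc0 : 0 < α / (1 + α) := div_pos hα0 h1α
  have heq : 2 * α / (1 + α) = 2 * (α / (1 + α)) := by ring
  rcases le_total (B2 (x - 2)) (α / (1 + α)) with h | h
  · calc |(|fα α x| - |ftα α x|)| ≤ |fα α x - ftα α x| := abs_abs_sub_abs_le_abs_sub _ _
      _ = |2 * B2 (x - 2)| := by
          rw [show fα α x - ftα α x = 2 * B2 (x - 2) by unfold fα ftα; ring]
      _ = 2 * B2 (x - 2) := abs_of_nonneg (by linarith [B2_nonneg (x - 2)])
      _ ≤ 2 * α / (1 + α) := by rw [heq]; linarith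
  · have h3 : α / (1 + α) ≤ 1 - |x - 2 - 1| := by
      rcases le_max_iff.mp h with h' | h'
      · exact h'
      · linarith
    have hx3 : x - 2 - 1 = x - 3 := by ring
    rw [hx3] at h3
    have h4 : -(1 - α / (1 + α)) ≤ x - 3 := by
      have := abs_le.mp (show |x - 3| ≤ 1 - α / (1 + α) by linarith)
      linarith [this.1]
    have hdiv : α / (1 + α) + 1 / (1 + α) = 1 := by field_simp; ring
    have hdle : 1 / (1 + α) ≤ 1 := by rw [div_le_one h1α]; linarith
    have hx2 : 2 ≤ x := by linarith
    have e0 : B2 x = 0 := B2_eq_zero_of_ge_two hx2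
    have e1 : B2 (x - 1) ≤ 1 / (1 + α) := by
      unfold B2
      refine max_le ?_ (by positivity)
      rw [abs_of_nonneg (by linarith : (0:ℝ) ≤ x - 1 - 1)]
      linarith
    calc |(|fα α x| - |ftα α x|)| ≤ |fα α x + ftα α x| := aux_abs _ _
      _ = 2 * B2 x + 2 * α * B2 (x - 1) := by
          rw [show fα α x + ftα α x = 2 * B2 x + 2 * α * B2 (x - 1) by unfold fα ftα; ring]
          exact abs_of_nonneg (by nlinarith [B2_nonneg x, B2_nonneg (x - 1)])
      _ ≤ 2 * α / (1 + α) := by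
          rw [e0]
          have h5 : α * B2 (x - 1) ≤ α * (1 / (1 + α)) :=
            mul_le_mul_of_nonneg_left e1 hα0.le
          have h6 : α * (1 / (1 + α)) = α / (1 + α) := by ring
          rw [heq]; linarith

/-- for `0 < α < 1`,
`min_{δ∈{−1,1}} ‖f_α − δ f̃_α‖_∞ = 2` and `‖|f_α| − |f̃_α|‖_∞ = 2α/(1+α)`. -/
theorem stmt18 (α : ℝ) (hα : α ∈ Set.Ioo (0 : ℝ) 1) :
    min (⨆ x : ℝ, |fα α x - ftα α x|) (⨆ x : ℝ, |fα α x + ftα α x|) = 2 ∧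
    (⨆ x : ℝ, abs (|fα α x| - |ftα α x|)) = 2 * α / (1 + α) := by
  obtain ⟨hα0, hα1⟩ := hα
  have h1α : (0:ℝ) < 1 + α := by linarith
  constructor
  · have hs1 : (⨆ x : ℝ, |fα α x - ftα α x|) = 2 := by
      apply ciSup_eq_of
      · intro x
        rw [show fα α x - ftα α x = 2 * B2 (x - 2) by unfold fα ftα; ring,
          abs_of_nonneg (by linarith [B2_nonneg (x - 2)])]
        linarith [B2_le_one (x - 2)]
      · show |fα α 3 - ftα α 3| = 2
        norm_num [fα, ftα, B2, abs_of_nonneg]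
    have hs2 : (⨆ x : ℝ, |fα α x + ftα α x|) = 2 := by
      apply ciSup_eq_of
      · intro x
        rw [show fα α x + ftα α x = 2 * (B2 x + α * B2 (x - 1)) by unfold fα ftα; ring,
          abs_of_nonneg (by nlinarith [B2_nonneg x, B2_nonneg (x - 1)])]
        linarith [key_le_one hα0.le hα1.le x]
      · show |fα α 1 + ftα α 1| = 2
        norm_num [fα, ftα, B2, abs_of_nonneg]
    rw [hs1, hs2, min_self]
  · refine ciSup_eq_of (bound3 hα0 hα1) ((3 * α + 2) / (1 + α)) ?_
    set x0 : ℝ := (3 * α + 2) / (1 + α) with hx0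
    have hx2 : (2:ℝ) ≤ x0 := by rw [hx0, le_div_iff₀ h1α]; linarith
    have e0 : B2 x0 = 0 := B2_eq_zero_of_ge_two hx2
    have ha1 : x0 - 1 - 1 = α / (1 + α) := by rw [hx0]; field_simp; ring
    have hd1 : α / (1 + α) ≤ 1 := by rw [div_le_one h1α]; linarith
    have e1 : B2 (x0 - 1) = 1 / (1 + α) := by
      unfold B2
      rw [ha1, abs_of_nonneg (by positivity), max_eq_left (by linarith)]
      field_simp; ring
    have ha2 : x0 - 2 - 1 = -(1 / (1 + α)) := by rw [hx0]; field_simp; ring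
    have hd2 : 1 / (1 + α) ≤ 1 := by rw [div_le_one h1α]; linarith
    have e2 : B2 (x0 - 2) = α / (1 + α) := by
      unfold B2
      rw [ha2, abs_neg, abs_of_nonneg (by positivity), max_eq_left (by linarith)]
      field_simp; ring
    have ef : fα α x0 = 2 * α / (1 + α) := by unfold fα; rw [e0, e1, e2]; ring
    have eft : ftα α x0 = 0 := by unfold ftα; rw [e0, e1, e2]; ring
    rw [ef, eft, abs_zero, sub_zero, abs_abs, abs_of_nonneg (by positivity)]
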